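/- arXiv:1702.05656 — 2 statements merged into one kernel-verified Lean document; each statement's English description precedes it below -/
import Mathlib

section
/- Let σ, β > 0, ε > 0, and let c ∈ ℝ³ with c ≠ 0 and |c| ≤ 1. For N(k) = ε(σ|k|² + β i c·k) and 3/2 ≤ q < 2, there exist a constant C (depending on σ, β, q) and ϱ > 0 such that (∫_{|k| ≤ 2} |N(k)|^{-q} dk)^{1/q} ≤ C ε^{-1} |c|^{-1+ϱ}. -/
open MeasureTheory Real RealInnerProductSpace
open Set Metric

private lemma null_inner_zero (w : EuclideanSpace ℝ (Fin 3)) (hw : w ≠ 0) :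
    volume {k : EuclideanSpace ℝ (Fin 3) | ⟪w, k⟫ = 0} = 0 := by
  have hset : {k : EuclideanSpace ℝ (Fin 3) | ⟪w, k⟫ = 0}
      = ((ℝ ∙ w)ᗮ : Submodule ℝ (EuclideanSpace ℝ (Fin 3))) := by
    ext k
    simp [Submodule.mem_orthogonal_singleton_iff_inner_right]
  rw [hset]
  refine Measure.addHaar_submodule _ _ fun htop => hw ?_
  have hmem : w ∈ (ℝ ∙ w)ᗮ := htop.symm ▸ Submodule.mem_top
  rw [Submodule.mem_orthogonal_singleton_iff_inner_right] at hmem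
  exact inner_self_eq_zero.mp hmem

private lemma abs_rpow_int {r : ℝ} (hr : -1 < r) :
    IntegrableOn (fun t : ℝ => |t| ^ r) (Icc (-2 : ℝ) 2) := by
  have h02 : IntervalIntegrable (fun t : ℝ => |t| ^ r) volume 0 2 := by
    rw [intervalIntegrable_iff_integrableOn_Ioc_of_le (by norm_num)]
    refine ((intervalIntegrable_iff_integrableOn_Ioc_of_le (by norm_num : (0:ℝ) ≤ 2)).mp
      (intervalIntegral.intervalIntegrable_rpow' hr)).congr_fun ?_ measurableSet_Ioc
    intro t ht
    show t ^ r = |t| ^ r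
    rw [abs_of_pos ht.1]
  have hneg : IntervalIntegrable (fun t : ℝ => |t| ^ r) volume (-2) 0 := by
    simpa [abs_neg] using ((IntervalIntegrable.iff_comp_neg (by simp)).mp h02).symm
  have h := hneg.trans h02
  rwa [intervalIntegrable_iff', uIcc_of_le (by norm_num : (-2:ℝ) ≤ 2)] at h

private lemma coord_abs_le_norm (k : EuclideanSpace ℝ (Fin 3)) (i : Fin 3) : |k i| ≤ ‖k‖ := by
  have := abs_real_inner_le_norm (EuclideanSpace.single i (1:ℝ)) k
  simpa [EuclideanSpace.inner_single_left] using this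

private lemma key_integral (q : ℝ) (hq0 : 0 < q) (hq2 : q < 2) :
    ∃ J : ℝ, 0 ≤ J ∧ ∀ u : EuclideanSpace ℝ (Fin 3), ‖u‖ = 1 →
      IntegrableOn (fun k : EuclideanSpace ℝ (Fin 3) => ‖k‖ ^ (-q) * |⟪u, k⟫| ^ (-(q/2)))
        (closedBall 0 2) ∧
      (∫ k in closedBall (0 : EuclideanSpace ℝ (Fin 3)) 2,
          ‖k‖ ^ (-q) * |⟪u, k⟫| ^ (-(q/2))) ≤ J := by
  classical
  set e : ℝ := -(q/2) with he
  set φ : ℝ → ℝ := Set.indicator (Icc (-2 : ℝ) 2) (fun t => |t| ^ e) with hφdef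
  have hφ : Integrable φ := by
    rw [hφdef, integrable_indicator_iff measurableSet_Icc]
    exact abs_rpow_int (by rw [he]; linarith)
  have hφnn : ∀ t, 0 ≤ φ t := fun t =>
    Set.indicator_nonneg (fun s _ => rpow_nonneg (abs_nonneg s) e) t
  have hH : Integrable (fun x : Fin 3 → ℝ => ∏ i, φ (x i)) :=
    Integrable.fintype_prod (f := fun _ t => φ t) (fun _ => hφ)
  set H : EuclideanSpace ℝ (Fin 3) → ℝ := fun k => ∏ i, φ (k i) with hHdef
  have hH' : Integrable H := by
    have h := (EuclideanSpace.volume_preserving_symm_measurableEquiv_toLp (Fin 3)).integrable_comp_emb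
      (MeasurableEquiv.measurableEmbedding _) (g := fun x : Fin 3 → ℝ => ∏ i, φ (x i))
    exact h.mpr hH
  have hHnn : ∀ k, 0 ≤ H k := fun k => Finset.prod_nonneg fun i _ => hφnn _
  set g₀ : EuclideanSpace ℝ (Fin 3) → ℝ := fun x => ‖x‖ ^ (-q) * |x 0| ^ e with hg₀def
  -- a.e. bound of g₀ by H on the ball
  have hnull : ∀ᵐ x : EuclideanSpace ℝ (Fin 3), x 1 ≠ 0 ∧ x 2 ≠ 0 := by
    have h1 : ∀ᵐ x : EuclideanSpace ℝ (Fin 3), x 1 ≠ 0 := by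
      rw [ae_iff]
      have := null_inner_zero (EuclideanSpace.single 1 (1:ℝ)) (by
        intro h
        have := congrArg (fun v : EuclideanSpace ℝ (Fin 3) => v 1) h
        simpa using this)
      refine measure_mono_null ?_ this
      intro x hx
      simpa [EuclideanSpace.inner_single_left] using not_not.mp hx
    have h2 : ∀ᵐ x : EuclideanSpace ℝ (Fin 3), x 2 ≠ 0 := by
      rw [ae_iff]
      have := null_inner_zero (EuclideanSpace.single 2 (1:ℝ)) (by
        intro h
        have := congrArg (fun v : EuclideanSpace ℝ (Fin 3) => v 2) h
        simpa using this)
      refine measure_mono_null ?_ this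
      intro x hx
      simpa [EuclideanSpace.inner_single_left] using not_not.mp hx
    exact h1.and h2
  have hbound : ∀ x ∈ closedBall (0 : EuclideanSpace ℝ (Fin 3)) 2,
      x 1 ≠ 0 → x 2 ≠ 0 → g₀ x ≤ H x := by
    intro x hx h1 h2
    have hxnorm : ‖x‖ ≤ 2 := by simpa [mem_closedBall, dist_zero_right] using hx
    have hcoord : ∀ i, |x i| ≤ 2 := fun i => (coord_abs_le_norm x i).trans hxnorm
    have hmem : ∀ i : Fin 3, x i ∈ Icc (-2:ℝ) 2 := fun i => abs_le.mp (hcoord i)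
    have hHx : H x = |x 0| ^ e * (|x 1| ^ e * |x 2| ^ e) := by
      rw [hHdef]
      simp only [Fin.prod_univ_three, hφdef, Set.indicator_of_mem (hmem 0),
        Set.indicator_of_mem (hmem 1), Set.indicator_of_mem (hmem 2)]
      ring
    set P : ℝ := |x 1| * |x 2| with hP
    have hPpos : 0 < P := mul_pos (abs_pos.mpr h1) (abs_pos.mpr h2)
    have hsqrtP : Real.sqrt P ≤ ‖x‖ := by
      rw [show ‖x‖ = Real.sqrt (‖x‖^2) from (Real.sqrt_sq (norm_nonneg x)).symm]
      apply Real.sqrt_le_sqrt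
      have hnx : ‖x‖^2 = ∑ i, ‖x i‖^2 := by
        rw [EuclideanSpace.norm_eq, Real.sq_sqrt]
        exact Finset.sum_nonneg fun i _ => sq_nonneg _
      rw [hnx, Fin.sum_univ_three]
      have e1 : ‖x 1‖ = |x 1| := rfl
      have e2 : ‖x 2‖ = |x 2| := rfl
      nlinarith [abs_nonneg (x 1), abs_nonneg (x 2), sq_nonneg (|x 1| - |x 2|),
        sq_nonneg (‖x 0‖), sq_abs (x 1), sq_abs (x 2)]
    have hkey : ‖x‖ ^ (-q) ≤ P ^ e := by
      have h1' : ‖x‖ ^ (-q) ≤ Real.sqrt P ^ (-q) :=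
        Real.rpow_le_rpow_of_nonpos (Real.sqrt_pos.mpr hPpos) hsqrtP (by linarith)
      have h2' : Real.sqrt P ^ (-q) = P ^ e := by
        rw [Real.sqrt_eq_rpow, ← Real.rpow_mul hPpos.le, he]
        ring_nf
      linarith [h1', h2'.le, h2'.ge]
    calc g₀ x = ‖x‖ ^ (-q) * |x 0| ^ e := rfl
      _ ≤ P ^ e * |x 0| ^ e :=
        mul_le_mul_of_nonneg_right hkey (rpow_nonneg (abs_nonneg _) e)
      _ = |x 0| ^ e * (|x 1| ^ e * |x 2| ^ e) := by
        rw [hP, Real.mul_rpow (abs_nonneg _) (abs_nonneg _)]; ring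
      _ = H x := hHx.symm
  have hboundae : ∀ᵐ x ∂(volume.restrict (closedBall (0 : EuclideanSpace ℝ (Fin 3)) 2)),
      g₀ x ≤ H x := by
    filter_upwards [ae_restrict_mem measurableSet_closedBall, ae_restrict_of_ae hnull]
      with x hx hne
    exact hbound x hx hne.1 hne.2
  have hg₀meas : AEStronglyMeasurable g₀
      (volume.restrict (closedBall (0 : EuclideanSpace ℝ (Fin 3)) 2)) := by
    apply Measurable.aestronglyMeasurable
    fun_prop
  have hg₀int : IntegrableOn g₀ (closedBall (0 : EuclideanSpace ℝ (Fin 3)) 2) := by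
    refine Integrable.mono' hH'.integrableOn hg₀meas ?_
    filter_upwards [hboundae] with x hx
    rw [Real.norm_eq_abs, abs_of_nonneg (by positivity)]
    exact hx
  have hg₀le : (∫ x in closedBall (0 : EuclideanSpace ℝ (Fin 3)) 2, g₀ x) ≤ ∫ x, H x := by
    calc (∫ x in closedBall (0 : EuclideanSpace ℝ (Fin 3)) 2, g₀ x)
        ≤ ∫ x in closedBall (0 : EuclideanSpace ℝ (Fin 3)) 2, H x :=
          integral_mono_ae hg₀int hH'.integrableOn hboundae
      _ ≤ ∫ x, H x := setIntegral_le_integral hH' (Filter.Eventually.of_forall hHnn)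
  refine ⟨∫ x, H x, integral_nonneg hHnn, ?_⟩
  intro u hu
  -- rotate u to the first coordinate vector
  have hortho : Orthonormal ℝ (({0} : Set (Fin 3)).restrict (fun _ : Fin 3 => u)) := by
    constructor
    · intro i; exact hu
    · intro i j hij; exact absurd (Subsingleton.elim i j) hij
  obtain ⟨b, hb⟩ := hortho.exists_orthonormalBasis_extension_of_card_eq (by simp)
  have hb0 : b 0 = u := hb 0 rfl
  set S := b.repr.symm with hS
  have mpS : MeasurePreserving S volume volume := b.measurePreserving_repr_symm
  have hpre : S ⁻¹' (closedBall (0 : EuclideanSpace ℝ (Fin 3)) 2) = closedBall 0 2 := by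
    ext x
    simp [mem_closedBall, dist_zero_right, LinearIsometryEquiv.norm_map]
  have ME : MeasurableEmbedding S := S.toHomeomorph.measurableEmbedding
  have mpR : MeasurePreserving S
      (volume.restrict (closedBall (0 : EuclideanSpace ℝ (Fin 3)) 2))
      (volume.restrict (closedBall (0 : EuclideanSpace ℝ (Fin 3)) 2)) := by
    refine ⟨mpS.measurable, ?_⟩
    conv_lhs => rw [← hpre]
    rw [← Measure.restrict_map mpS.measurable measurableSet_closedBall, mpS.map_eq]
  have hcomp : (fun k : EuclideanSpace ℝ (Fin 3) => ‖k‖ ^ (-q) * |⟪u, k⟫| ^ (-(q/2))) ∘ S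
      = g₀ := by
    funext x
    have hinner : ⟪u, S x⟫ = x 0 := by
      rw [← hb0, hS, ← OrthonormalBasis.repr_apply_apply, LinearIsometryEquiv.apply_symm_apply]
    simp only [Function.comp_apply, hinner, LinearIsometryEquiv.norm_map, hg₀def, he]
  have hint : IntegrableOn (fun k : EuclideanSpace ℝ (Fin 3) => ‖k‖ ^ (-q) * |⟪u, k⟫| ^ (-(q/2)))
      (closedBall 0 2) :=
    (mpR.integrable_comp_emb ME).mp (by rw [hcomp]; exact hg₀int)
  refine ⟨hint, ?_⟩
  have hintegral := mpR.integral_comp ME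
    (g := fun k : EuclideanSpace ℝ (Fin 3) => ‖k‖ ^ (-q) * |⟪u, k⟫| ^ (-(q/2)))
  calc (∫ k in closedBall (0 : EuclideanSpace ℝ (Fin 3)) 2, ‖k‖ ^ (-q) * |⟪u, k⟫| ^ (-(q/2)))
      = ∫ x in closedBall (0 : EuclideanSpace ℝ (Fin 3)) 2,
          ((fun k : EuclideanSpace ℝ (Fin 3) => ‖k‖ ^ (-q) * |⟪u, k⟫| ^ (-(q/2))) ∘ S) x := by
        rw [← hintegral]; rfl
    _ = ∫ x in closedBall (0 : EuclideanSpace ℝ (Fin 3)) 2, g₀ x := by rw [hcomp]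
    _ ≤ ∫ x, H x := hg₀le

/-- Anisotropic multiplier estimate: for `N(k) = ε(σ|k|² + iβ c·k)` and
`3/2 ≤ q < 2`, there are `C` (depending on σ, β, q) and `ϱ > 0` with
`(∫_{|k|≤2} |N(k)|^{-q})^{1/q} ≤ C ε⁻¹ |c|^{-1+ϱ}`. -/
theorem multiplier_estimate_small_c (σ β q : ℝ)
    (hσ : 0 < σ) (hβ : 0 < β) (hq1 : 3/2 ≤ q) (hq2 : q < 2) :
    ∃ C > (0:ℝ), ∃ ϱ > (0:ℝ), ∀ (ε : ℝ), 0 < ε → ε ≤ 1 →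
      ∀ c : EuclideanSpace ℝ (Fin 3), c ≠ 0 → ‖c‖ ≤ 1 →
      (∫ k in Metric.closedBall (0 : EuclideanSpace ℝ (Fin 3)) 2,
          ‖((ε * (σ * ‖k‖^2) : ℝ) : ℂ)
            + ((ε * (β * ⟪c, k⟫) : ℝ) : ℂ) * Complex.I‖ ^ (-q)) ^ (1/q)
        ≤ C * ε⁻¹ * ‖c‖ ^ (-1 + ϱ) := by
  have hq0 : (0:ℝ) < q := by linarith
  obtain ⟨J, hJ0, hJ⟩ := key_integral q hq0 hq2
  refine ⟨(σ * β) ^ (-(1/2) : ℝ) * (J + 1) ^ (1/q), by positivity, 1/2, by norm_num, ?_⟩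
  intro ε hε hε1 c hc hc1
  have hcn : 0 < ‖c‖ := norm_pos_iff.mpr hc
  set u : EuclideanSpace ℝ (Fin 3) := (‖c‖⁻¹ : ℝ) • c with hu_def
  have hu : ‖u‖ = 1 := norm_smul_inv_norm hc
  have hcu : (‖c‖ : ℝ) • u = c := by
    rw [hu_def, smul_smul, mul_inv_cancel₀ hcn.ne', one_smul]
  obtain ⟨hint_u, hle_u⟩ := hJ u hu
  set A : ℝ := ε ^ (-q) * (σ * β) ^ (-(q/2)) * ‖c‖ ^ (-(q/2)) with hA
  have hA0 : 0 ≤ A := by positivity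
  set g : EuclideanSpace ℝ (Fin 3) → ℝ :=
    fun k => ‖k‖ ^ (-q) * |⟪u, k⟫| ^ (-(q/2)) with hg
  -- pointwise bound off the hyperplane
  have hptwise : ∀ k : EuclideanSpace ℝ (Fin 3), ⟪c, k⟫ ≠ 0 →
      ‖((ε * (σ * ‖k‖^2) : ℝ) : ℂ) + ((ε * (β * ⟪c, k⟫) : ℝ) : ℂ) * Complex.I‖ ^ (-q)
        ≤ A * g k := by
    intro k hck
    have hk0 : k ≠ 0 := by rintro rfl; exact hck (inner_zero_right c)
    have hkn : 0 < ‖k‖ := norm_pos_iff.mpr hk0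
    have hw : 0 < |⟪c, k⟫| := abs_pos.mpr hck
    set a : ℝ := ε * (σ * ‖k‖^2) with ha
    set d : ℝ := ε * (β * ⟪c, k⟫) with hd
    set X : ℝ := ε^2 * (σ * β) * ‖k‖^2 * |⟪c, k⟫| with hX
    have hX0 : 0 < X := by positivity
    have hXle : X ≤ a^2 + d^2 := by
      have key : σ * β * (‖k‖^2 * |⟪c, k⟫|) ≤ (σ * ‖k‖^2)^2 + (β * |⟪c, k⟫|)^2 := by
        nlinarith [sq_nonneg (σ * ‖k‖^2 - β * |⟪c, k⟫|),
          mul_nonneg (mul_nonneg hσ.le hβ.le) (mul_nonneg (sq_nonneg ‖k‖) hw.le)]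
      calc X = ε^2 * (σ * β * (‖k‖^2 * |⟪c, k⟫|)) := by rw [hX]; ring
        _ ≤ ε^2 * ((σ * ‖k‖^2)^2 + (β * |⟪c, k⟫|)^2) :=
            mul_le_mul_of_nonneg_left key (sq_nonneg ε)
        _ = a^2 + d^2 := by
            rw [ha, hd]
            linear_combination (ε^2 * β^2) * sq_abs (⟪c, k⟫ : ℝ)
    have hnorm : ‖((a : ℝ) : ℂ) + ((d : ℝ) : ℂ) * Complex.I‖ = Real.sqrt (a^2 + d^2) := by
      rw [Complex.norm_add_mul_I]
    have hsqrt : Real.sqrt X ≤ ‖((a : ℝ) : ℂ) + ((d : ℝ) : ℂ) * Complex.I‖ := by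
      rw [hnorm]; exact Real.sqrt_le_sqrt hXle
    have hstep : ‖((a : ℝ) : ℂ) + ((d : ℝ) : ℂ) * Complex.I‖ ^ (-q) ≤ X ^ (-(q/2)) := by
      have h1 : ‖((a : ℝ) : ℂ) + ((d : ℝ) : ℂ) * Complex.I‖ ^ (-q) ≤ Real.sqrt X ^ (-q) :=
        Real.rpow_le_rpow_of_nonpos (Real.sqrt_pos.mpr hX0) hsqrt (by linarith)
      have h2 : Real.sqrt X ^ (-q) = X ^ (-(q/2)) := by
        rw [Real.sqrt_eq_rpow, ← Real.rpow_mul hX0.le]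
        congr 1; ring
      rw [h2] at h1; exact h1
    have hsplit : X ^ (-(q/2)) = A * g k := by
      have hwc : ⟪c, k⟫ = ‖c‖ * ⟪u, k⟫ := by
        rw [← hcu, real_inner_smul_left, hcu]
      have habs : |⟪c, k⟫| = ‖c‖ * |⟪u, k⟫| := by
        rw [hwc, abs_mul, abs_of_pos hcn]
      have e1 : (ε^2 * (σ * β) * ‖k‖^2 * (‖c‖ * |⟪u, k⟫|)) ^ (-(q/2))
          = (ε^2 * (σ * β) * ‖k‖^2) ^ (-(q/2)) * (‖c‖ * |⟪u, k⟫|) ^ (-(q/2)) :=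
        Real.mul_rpow (by positivity) (by positivity)
      have e2 : (ε^2 * (σ * β) * ‖k‖^2 : ℝ) ^ (-(q/2))
          = (ε^2 * (σ * β)) ^ (-(q/2)) * (‖k‖^2) ^ (-(q/2)) :=
        Real.mul_rpow (by positivity) (by positivity)
      have e3 : (ε^2 * (σ * β) : ℝ) ^ (-(q/2)) = (ε^2) ^ (-(q/2)) * (σ * β) ^ (-(q/2)) :=
        Real.mul_rpow (by positivity) (by positivity)
      have e4 : (‖c‖ * |⟪u, k⟫| : ℝ) ^ (-(q/2)) = ‖c‖ ^ (-(q/2)) * |⟪u, k⟫| ^ (-(q/2)) :=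
        Real.mul_rpow (by positivity) (abs_nonneg _)
      have hε2 : (ε^2 : ℝ) ^ (-(q/2)) = ε ^ (-q) := by
        rw [← Real.rpow_natCast ε 2, ← Real.rpow_mul hε.le]
        congr 1; push_cast; ring
      have hk2 : (‖k‖^2 : ℝ) ^ (-(q/2)) = ‖k‖ ^ (-q) := by
        rw [← Real.rpow_natCast ‖k‖ 2, ← Real.rpow_mul hkn.le]
        congr 1; push_cast; ring
      rw [hX, habs, e1, e2, e3, e4, hε2, hk2, hA, hg]
      ring
    rw [← hsplit]; exact hstep
  -- integral bound
  have hckae : ∀ᵐ k : EuclideanSpace ℝ (Fin 3), ⟪c, k⟫ ≠ 0 := by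
    rw [ae_iff]
    refine measure_mono_null ?_ (null_inner_zero c hc)
    intro x hx; exact not_not.mp hx
  have hInt : Integrable (fun k => A * g k)
      (volume.restrict (Metric.closedBall (0 : EuclideanSpace ℝ (Fin 3)) 2)) :=
    hint_u.const_mul A
  have hmono : (∫ k in Metric.closedBall (0 : EuclideanSpace ℝ (Fin 3)) 2,
      ‖((ε * (σ * ‖k‖^2) : ℝ) : ℂ) + ((ε * (β * ⟪c, k⟫) : ℝ) : ℂ) * Complex.I‖ ^ (-q))
      ≤ A * (J + 1) := by
    calc (∫ k in Metric.closedBall (0 : EuclideanSpace ℝ (Fin 3)) 2,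
        ‖((ε * (σ * ‖k‖^2) : ℝ) : ℂ) + ((ε * (β * ⟪c, k⟫) : ℝ) : ℂ) * Complex.I‖ ^ (-q))
        ≤ ∫ k in Metric.closedBall (0 : EuclideanSpace ℝ (Fin 3)) 2, A * g k := by
          refine integral_mono_of_nonneg
            (Filter.Eventually.of_forall fun k => rpow_nonneg (norm_nonneg _) _) hInt ?_
          exact ae_restrict_of_ae (hckae.mono fun k hk => hptwise k hk)
      _ = A * ∫ k in Metric.closedBall (0 : EuclideanSpace ℝ (Fin 3)) 2, g k :=
          integral_const_mul A g
      _ ≤ A * (J + 1) := mul_le_mul_of_nonneg_left (hle_u.trans (by linarith)) hA0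
  have hfinal : ((A * (J + 1)) : ℝ) ^ (1/q)
      = ((σ * β) ^ (-(1/2) : ℝ) * (J + 1) ^ (1/q)) * ε⁻¹ * ‖c‖ ^ ((-1 : ℝ) + 1/2) := by
    have hJ1 : (0:ℝ) ≤ J + 1 := by linarith
    rw [Real.mul_rpow hA0 hJ1, hA,
        Real.mul_rpow (by positivity) (by positivity),
        Real.mul_rpow (by positivity) (by positivity)]
    have h1 : (ε ^ (-q)) ^ (1/q) = ε⁻¹ := by
      rw [← Real.rpow_mul hε.le]
      rw [show -q * (1/q) = -1 from by field_simp]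
      exact Real.rpow_neg_one ε
    have h2 : ((σ * β) ^ (-(q/2))) ^ (1/q) = (σ * β) ^ (-(1/2) : ℝ) := by
      rw [← Real.rpow_mul (by positivity : (0:ℝ) ≤ σ * β)]
      congr 1; field_simp
    have h3 : (‖c‖ ^ (-(q/2))) ^ (1/q) = ‖c‖ ^ ((-1 : ℝ) + 1/2) := by
      rw [← Real.rpow_mul hcn.le]
      congr 1; field_simp; ring
    rw [h1, h2, h3]; ring
  calc (∫ k in Metric.closedBall (0 : EuclideanSpace ℝ (Fin 3)) 2,
      ‖((ε * (σ * ‖k‖^2) : ℝ) : ℂ) + ((ε * (β * ⟪c, k⟫) : ℝ) : ℂ) * Complex.I‖ ^ (-q)) ^ (1/q)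
      ≤ ((A * (J + 1)) : ℝ) ^ (1/q) := by
        refine Real.rpow_le_rpow ?_ hmono (by positivity)
        exact integral_nonneg fun k => rpow_nonneg (norm_nonneg _) _
    _ = ((σ * β) ^ (-(1/2) : ℝ) * (J + 1) ^ (1/q)) * ε⁻¹ * ‖c‖ ^ ((-1 : ℝ) + 1/2) := hfinal
end

section
/- Suppose w : ℝ³ → ℝ satisfies w(v)^{-1} ≤ μ_c(v)^{β/2} ⟨v⟩^{-β'} with β > 0, β' > 2, where μ_c(v) = (2π)^{-3/2}exp(-|v−εc|²/2) and ⟨v⟩ = (1+|v|²)^{1/2}. Then for any α > 0 and any unit vector n, ∫_{ℝ³} w(v)^{-2} 𝟙_{{√μ_c(v) < α·w(v)^{-1}}} μ_c(v) |v·n| dv ≤ C α^{2+2β} for a constant C depending only on β, β' (and uniformly for ε|c| ≤ 1). -/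
open MeasureTheory Real RealInnerProductSpace

noncomputable def gauss (v : EuclideanSpace ℝ (Fin 3)) : ℝ :=
  (2 * Real.pi) ^ (-(3:ℝ)/2) * Real.exp (-‖v‖^2 / 2)

noncomputable def gaussC (ε : ℝ) (c v : EuclideanSpace ℝ (Fin 3)) : ℝ :=
  gauss (v - ε • c)

lemma gauss_pos (v : EuclideanSpace ℝ (Fin 3)) : 0 < gauss v := by
  unfold gauss
  positivity

lemma gauss_le_one (v : EuclideanSpace ℝ (Fin 3)) : gauss v ≤ 1 := by
  unfold gauss
  have h1 : (2 * Real.pi) ^ (-(3:ℝ)/2) ≤ 1 :=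
    Real.rpow_le_one_of_one_le_of_nonpos (by nlinarith [Real.pi_gt_three]) (by norm_num)
  have h2 : Real.exp (-‖v‖^2 / 2) ≤ 1 := by
    rw [Real.exp_le_one_iff]
    nlinarith [sq_nonneg ‖v‖]
  have h0 : (0:ℝ) ≤ (2 * Real.pi) ^ (-(3:ℝ)/2) := by positivity
  nlinarith

/-- Small-set estimate: if `w⁻¹ ≤ μ_c^{β/2} ⟨v⟩^{-β'}` with `β > 0`, `β' > 2`,
then `∫ w⁻² 𝟙_{√μ_c < α w⁻¹} μ_c |v·n| dv ≤ C α^{2+2β}` uniformly for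
`ε|c| ≤ 1`. -/
theorem small_velocity_set_estimate (β β' : ℝ) (hβ : 0 < β) (hβ' : 2 < β') :
    ∃ C > (0:ℝ), ∀ (ε : ℝ) (c : EuclideanSpace ℝ (Fin 3))
      (w : EuclideanSpace ℝ (Fin 3) → ℝ) (α : ℝ)
      (n : EuclideanSpace ℝ (Fin 3)),
      0 < ε → ε ≤ 1 → ε * ‖c‖ ≤ 1 → 0 < α → ‖n‖ = 1 →
      (∀ v, (w v)⁻¹ ≤ gaussC ε c v ^ (β/2) * (1 + ‖v‖^2) ^ (-β'/2)) →
      (∫ v : EuclideanSpace ℝ (Fin 3),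
          ((w v)⁻¹)^2
            * (if Real.sqrt (gaussC ε c v) < α * (w v)⁻¹ then (1:ℝ) else 0)
            * gaussC ε c v * |⟪v, n⟫|)
        ≤ C * α ^ (2 + 2*β) := by
  have hint : Integrable
      (fun v : EuclideanSpace ℝ (Fin 3) => ((1:ℝ) + ‖v‖^2) ^ ((1 - 2*β')/2)) := by
    have h3 : ((Module.finrank ℝ (EuclideanSpace ℝ (Fin 3))) : ℝ) < 2*β' - 1 := by
      simp [finrank_euclideanSpace]
      linarith
    have := integrable_rpow_neg_one_add_norm_sq
      (E := EuclideanSpace ℝ (Fin 3)) (μ := volume) h3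
    have he : -(2*β' - 1)/2 = (1 - 2*β')/2 := by ring
    simpa [he] using this
  set I : ℝ := ∫ v : EuclideanSpace ℝ (Fin 3), ((1:ℝ) + ‖v‖^2) ^ ((1 - 2*β')/2)
    with hI
  have hInn : 0 ≤ I := integral_nonneg fun v => by positivity
  refine ⟨1 + I, by linarith, ?_⟩
  intro ε c w α n hε hε1 hεc hα hn hw
  have hαp : (0:ℝ) ≤ α ^ (2 + 2*β) := by positivity
  have key : (∫ v : EuclideanSpace ℝ (Fin 3),
          ((w v)⁻¹)^2
            * (if Real.sqrt (gaussC ε c v) < α * (w v)⁻¹ then (1:ℝ) else 0)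
            * gaussC ε c v * |⟪v, n⟫|)
      ≤ ∫ v : EuclideanSpace ℝ (Fin 3),
          ((1:ℝ) + ‖v‖^2) ^ ((1 - 2*β')/2) * α ^ (2 + 2*β) := by
    refine integral_mono_of_nonneg (Filter.Eventually.of_forall fun v => ?_)
      (hint.mul_const _) (Filter.Eventually.of_forall fun v => ?_)
    · have hg := (gauss_pos (v - ε • c)).le
      by_cases h : Real.sqrt (gaussC ε c v) < α * (w v)⁻¹
      · simp only [h, if_true, mul_one]
        have : gaussC ε c v = gauss (v - ε • c) := rfl
        rw [this]
        positivity
      · simp [h]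
    · beta_reduce
      set m := gaussC ε c v with hmdef
      have hm : 0 < m := gauss_pos _
      have hm1 : m ≤ 1 := gauss_le_one _
      set t : ℝ := 1 + ‖v‖^2 with ht
      have ht1 : (1:ℝ) ≤ t := by nlinarith [sq_nonneg ‖v‖]
      have ht0 : (0:ℝ) < t := by linarith
      by_cases h : Real.sqrt m < α * (w v)⁻¹
      · simp only [h, if_true, mul_one]
        -- pointwise bound on the set
        have hwpos : 0 < (w v)⁻¹ := by
          have hs : 0 < Real.sqrt m := Real.sqrt_pos.mpr hm
          nlinarith
        have hB : (w v)⁻¹ ≤ m ^ (β/2) * t ^ (-β'/2) := hw v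
        -- key1 : (w⁻¹)^2 * m^(-β) ≤ t^(-β')
        have hsq : ((w v)⁻¹)^2 ≤ m ^ β * t ^ (-β') := by
          have := mul_le_mul hB hB hwpos.le (by positivity)
          calc ((w v)⁻¹)^2 = (w v)⁻¹ * (w v)⁻¹ := sq ((w v)⁻¹)
            _ ≤ (m ^ (β/2) * t ^ (-β'/2)) * (m ^ (β/2) * t ^ (-β'/2)) := this
            _ = (m ^ (β/2) * m ^ (β/2)) * (t ^ (-β'/2) * t ^ (-β'/2)) := by ring
            _ = m ^ β * t ^ (-β') := by
                rw [← Real.rpow_add hm, ← Real.rpow_add ht0]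
                ring_nf
        have key1 : ((w v)⁻¹)^2 * m ^ (-β) ≤ t ^ (-β') := by
          calc ((w v)⁻¹)^2 * m ^ (-β) ≤ (m ^ β * t ^ (-β')) * m ^ (-β) :=
                mul_le_mul_of_nonneg_right hsq (by positivity)
            _ = (m ^ β * m ^ (-β)) * t ^ (-β') := by ring
            _ = t ^ (-β') := by
                rw [← Real.rpow_add hm]
                simp
        -- key2 : m^(1+β) ≤ α^(2+2β)
        have hsle : Real.sqrt m ≤ α := by
          have h1 : m ^ (β/2) ≤ 1 :=
            Real.rpow_le_one hm.le hm1 (by positivity)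
          have h2 : t ^ (-β'/2) ≤ 1 :=
            Real.rpow_le_one_of_one_le_of_nonpos ht1 (by linarith)
          have h3 : m ^ (β/2) * t ^ (-β'/2) ≤ 1 := by
            have : (0:ℝ) ≤ m ^ (β/2) := by positivity
            nlinarith
          have := mul_le_mul_of_nonneg_left hB hα.le
          nlinarith
        have key2 : m ^ (1 + β) ≤ α ^ (2 + 2*β) := by
          have := Real.rpow_le_rpow (Real.sqrt_nonneg m) hsle (by linarith : (0:ℝ) ≤ 2 + 2*β)
          rwa [Real.sqrt_eq_rpow, ← Real.rpow_mul hm.le,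
            (by ring : 1/2 * (2 + 2*β) = 1 + β)] at this
        -- combine
        have hmain : ((w v)⁻¹)^2 * m ≤ t ^ (-β') * α ^ (2 + 2*β) := by
          have hdecomp : ((w v)⁻¹)^2 * m = (((w v)⁻¹)^2 * m ^ (-β)) * m ^ (1 + β) := by
            rw [mul_assoc, ← Real.rpow_add hm]
            norm_num
          rw [hdecomp]
          exact mul_le_mul key1 key2 (by positivity) (by positivity)
        -- |⟪v,n⟫| ≤ t^(1/2)
        have hip : |⟪v, n⟫| ≤ t ^ ((1:ℝ)/2) := by
          have h1 : |⟪v, n⟫| ≤ ‖v‖ * ‖n‖ := abs_real_inner_le_norm v n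
          have h2 : ‖v‖ ≤ Real.sqrt t := by
            rw [show t = 1 + ‖v‖^2 from ht]
            nlinarith [Real.sq_sqrt (show (0:ℝ) ≤ 1 + ‖v‖^2 by positivity),
              Real.sqrt_nonneg (1 + ‖v‖^2), norm_nonneg v]
          rw [show t ^ ((1:ℝ)/2) = Real.sqrt t by rw [Real.sqrt_eq_rpow]]
          calc |⟪v, n⟫| ≤ ‖v‖ * ‖n‖ := h1
            _ = ‖v‖ := by rw [hn, mul_one]
            _ ≤ Real.sqrt t := h2
        calc ((w v)⁻¹)^2 * m * |⟪v, n⟫|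
            ≤ (t ^ (-β') * α ^ (2 + 2*β)) * (t ^ ((1:ℝ)/2)) :=
              mul_le_mul hmain hip (abs_nonneg _) (by positivity)
          _ = (t ^ (-β') * t ^ ((1:ℝ)/2)) * α ^ (2 + 2*β) := by ring
          _ = t ^ ((1 - 2*β')/2) * α ^ (2 + 2*β) := by
              rw [← Real.rpow_add ht0, (by ring : -β' + (1:ℝ)/2 = (1 - 2*β')/2)]
      · simp only [h, if_false]
        have : (0:ℝ) ≤ t ^ ((1 - 2*β')/2) * α ^ (2 + 2*β) := by positivity
        simpa using this
  calc (∫ v : EuclideanSpace ℝ (Fin 3),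
          ((w v)⁻¹)^2
            * (if Real.sqrt (gaussC ε c v) < α * (w v)⁻¹ then (1:ℝ) else 0)
            * gaussC ε c v * |⟪v, n⟫|)
      ≤ ∫ v : EuclideanSpace ℝ (Fin 3),
          ((1:ℝ) + ‖v‖^2) ^ ((1 - 2*β')/2) * α ^ (2 + 2*β) := key
    _ = I * α ^ (2 + 2*β) := by rw [integral_mul_const]
    _ ≤ (1 + I) * α ^ (2 + 2*β) := by nlinarith
end
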